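/- Let $p$ be a prime, $t_1,\dots,t_r$ integers with $p \nmid t_j - t_{j'}$ for all $j \neq j'$, and $k \geq 1$. Let $R = \mathbb{Z}/p^k\mathbb{Z}$, $V = R^n$ with standard basis $e_1,\dots,e_n$, and let $H_1,\dots,H_r$ be finite abelian $p$-groups with $p^k H_j = 0$. Suppose $v_1,\dots,v_n \in V$ and $F_j \colon V \to H_j$ are surjective $R$-module homomorphisms satisfying $F_j v_i = -t_j F_j e_i$ for all $1 \leq i \leq n$ and $1 \leq j \leq r$. Then the map $F \colon V \to H_1 \times \cdots \times H_r$ given by $F(v) = (F_1 v, \dots, F_r v)$ is surjective. -/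

import Mathlib

/-- If `F_j v_i = -t_j F_j e_i` for surjections `F_j` onto finite abelian `p`-groups
killed by `p^k`, and the `t_j` are pairwise incongruent mod `p`, then the combined
map into the product is surjective. -/
theorem stmt0 (p : ℕ) (hp : p.Prime) (r n k : ℕ) (hk : 1 ≤ k)
    (t : Fin r → ℤ) (ht : ∀ j j' : Fin r, j ≠ j' → ¬ ((p : ℤ) ∣ (t j - t j')))
    (H : Fin r → Type) [∀ j, AddCommGroup (H j)] [∀ j, Module (ZMod (p ^ k)) (H j)]
    [∀ j, Fintype (H j)]
    (F : ∀ j, (Fin n → ZMod (p ^ k)) →ₗ[ZMod (p ^ k)] H j)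
    (hF : ∀ j, Function.Surjective (F j))
    (v : Fin n → (Fin n → ZMod (p ^ k)))
    (hv : ∀ (i : Fin n) (j : Fin r),
      F j (v i) = -(((t j : ZMod (p ^ k))) • F j (Pi.single i 1))) :
    Function.Surjective (fun x : Fin n → ZMod (p ^ k) => fun j : Fin r => F j x) := by
  classical
  -- The shift operator S : e_i ↦ v_i
  set S : Module.End (ZMod (p ^ k)) (Fin n → ZMod (p ^ k)) :=
    { toFun := fun x => ∑ i, x i • v i,
      map_add' := by intro a b; simp [add_smul, Finset.sum_add_distrib],
      map_smul' := by intro c a; simp [smul_smul, Finset.smul_sum] } with hSdef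
  have hFS : ∀ (j : Fin r) (x : Fin n → ZMod (p ^ k)),
      F j (S x) = (-(t j : ZMod (p ^ k))) • F j x := by
    intro j x
    have hx : (∑ i, x i • (Pi.single i 1 : Fin n → ZMod (p ^ k))) = x := by
      ext i'
      simp [Pi.single_apply]
    calc F j (S x) = ∑ i, x i • F j (v i) := by
          simp [hSdef, map_sum, map_smul]
      _ = ∑ i, x i • (-((t j : ZMod (p ^ k)) • F j (Pi.single i 1))) := by
          simp only [hv]
      _ = (-(t j : ZMod (p ^ k))) • F j (∑ i, x i • (Pi.single i 1 : Fin n → ZMod (p ^ k))) := by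
          rw [map_sum, Finset.smul_sum]
          congr 1
          ext i
          rw [map_smul, smul_comm (-(t j : ZMod (p ^ k))) (x i)]
          simp
      _ = (-(t j : ZMod (p ^ k))) • F j x := by rw [hx]
  have hFSpow : ∀ (m : ℕ) (j : Fin r) (x : Fin n → ZMod (p ^ k)),
      F j ((S ^ m) x) = ((-(t j : ZMod (p ^ k))) ^ m) • F j x := by
    intro m
    induction m with
    | zero => intro j x; simp
    | succ m ih =>
      intro j x
      rw [pow_succ, Module.End.mul_apply, ih, hFS, smul_smul, ← pow_succ]
  have key : ∀ (q : Polynomial (ZMod (p ^ k))) (j : Fin r) (x : Fin n → ZMod (p ^ k)),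
      F j ((Polynomial.aeval S q) x) = (q.eval (-(t j : ZMod (p ^ k)))) • F j x := by
    intro q
    induction q using Polynomial.induction_on' with
    | add q1 q2 ih1 ih2 =>
      intro j x
      rw [map_add, LinearMap.add_apply, map_add, ih1, ih2, Polynomial.eval_add, add_smul]
    | monomial m a =>
      intro j x
      rw [Polynomial.aeval_monomial, Module.End.mul_apply, Module.algebraMap_end_apply,
        map_smul, hFSpow, Polynomial.eval_monomial, smul_smul]
  -- each difference is a unit
  have hunit : ∀ j j' : Fin r, j' ≠ j → IsUnit ((t j' : ZMod (p ^ k)) - (t j : ZMod (p ^ k))) := by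
    intro j j' hne
    have hnd : ¬ ((p : ℤ) ∣ (t j' - t j)) := ht j' j hne
    have hcop : IsCoprime (t j' - t j) ((p : ℤ) ^ k) :=
      ((((Nat.prime_iff_prime_int.mp hp).coprime_iff_not_dvd).mpr hnd).symm).pow_right
    obtain ⟨a, b, hab⟩ := hcop
    have hcast := congrArg (fun z : ℤ => (z : ZMod (p ^ k))) hab
    push_cast at hcast
    have hp0 : ((p : ZMod (p ^ k))) ^ k = 0 := by
      rw [← Nat.cast_pow, ZMod.natCast_self]
    rw [hp0, mul_zero, add_zero] at hcast
    exact IsUnit.of_mul_eq_one _ (by rw [mul_comm]; exact hcast)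
  -- the interpolation polynomials
  intro y
  set P : Fin r → Polynomial (ZMod (p ^ k)) := fun j =>
    ∏ j' ∈ Finset.univ.erase j, (Polynomial.X + Polynomial.C (t j' : ZMod (p ^ k))) with hP
  have hPeval : ∀ j j' : Fin r,
      (P j).eval (-(t j' : ZMod (p ^ k))) =
        ∏ j'' ∈ Finset.univ.erase j, ((t j'' : ZMod (p ^ k)) - (t j' : ZMod (p ^ k))) := by
    intro j j'
    rw [hP]
    simp [Polynomial.eval_prod, sub_eq_neg_add]
  have hPzero : ∀ j j' : Fin r, j ≠ j' → (P j).eval (-(t j' : ZMod (p ^ k))) = 0 := by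
    intro j j' hne
    rw [hPeval]
    apply Finset.prod_eq_zero (i := j')
    · simp [Finset.mem_erase, Ne.symm hne]
    · simp
  have hPunit : ∀ j : Fin r, IsUnit ((P j).eval (-(t j : ZMod (p ^ k)))) := by
    intro j
    rw [hPeval]
    exact Finset.prod_induction _ IsUnit (fun a b => IsUnit.mul) isUnit_one
      (fun j'' hj'' => hunit j j'' (Finset.mem_erase.mp hj'').1)
  -- choose preimages
  choose u hu using fun j => (hPunit j)
  choose w hw using fun j => hF j (((u j)⁻¹ : (ZMod (p ^ k))ˣ) • y j)
  refine ⟨∑ j, (Polynomial.aeval S (P j)) (w j), ?_⟩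
  funext j'
  simp only [map_sum]
  rw [Finset.sum_eq_single j']
  · rw [key, hw, ← hu j', ← Units.smul_def]
    exact smul_inv_smul _ _
  · intro j _ hne
    rw [key, hPzero j j' hne, zero_smul]
  · intro h
    exact absurd (Finset.mem_univ j') h
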